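/- Let Σ be a type, M a monoid, and τ : (Σ × {0,1})* → M a monoid homomorphism from the free monoid on Σ × {0,1}. Define ξ : Σ* → ◊M by ξ(w) := ({τ(w^{(i)}) : 0 ≤ i < |w|}, τ(w⁰)). Then: (1) ξ is a monoid homomorphism from the free monoid Σ* to ◊M; (2) the second projection satisfies π₂(ξ(w)) = τ(w⁰) for all w; and (3) for every subset V ⊆ M, writing L_Φ := τ⁻¹(V), one has ξ⁻¹({(S,m) ∈ ◊M : S ∩ V ≠ ∅}) = {w ∈ Σ* : there exists i < |w| with w^{(i)} ∈ L_Φ}. -/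
import Mathlib


/-- The multiplication of the unary Schützenberger product `◊M` on `Finset M × M`:
`(S, m) * (T, n) = (S·n ∪ m·T, m·n)`. -/
def dMul {M : Type*} [Monoid M] [DecidableEq M] (p q : Finset M × M) : Finset M × M :=
  (p.1.image (fun s => s * q.2) ∪ q.1.image (fun t => p.2 * t), p.2 * q.2)

/-- `w^{(i)}`: the word over `Σ × 2` obtained from `w` by tagging the `i`-th letter with `1`
(`true`) and all other letters with `0` (`false`). -/
def marked {A : Type*} (w : List A) (i : ℕ) : FreeMonoid (A × Bool) :=
  FreeMonoid.ofList (w.mapIdx fun j c => (c, decide (j = i)))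

/-- `w⁰`: the word over `Σ × 2` obtained from `w` by tagging every letter with `0` (`false`). -/
def unmarked {A : Type*} (w : List A) : FreeMonoid (A × Bool) :=
  FreeMonoid.ofList (w.map fun c => (c, false))

/-- The map `ξ : Σ* → ◊M`, `ξ(w) = ({τ(w^{(i)}) : i < |w|}, τ(w⁰))`. -/
def xiMap {A M : Type*} [Monoid M] [DecidableEq M] (τ : FreeMonoid (A × Bool) →* M)
    (w : List A) : Finset M × M :=
  ((Finset.range w.length).image fun i => τ (marked w i), τ (unmarked w))

private lemma mapIdx_append' {α β : Type*} (f : ℕ → α → β) (v w : List α) :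
    (v ++ w).mapIdx f = v.mapIdx f ++ w.mapIdx (fun j c => f (v.length + j) c) := by
  induction v generalizing f with
  | nil => simp
  | cons a t ih =>
      simp only [List.cons_append, List.mapIdx_cons, ih, List.length_cons]
      congr 2
      ext j c
      ring_nf

private lemma mapIdx_eq_map' {α β : Type*} :
    ∀ (w : List α) (f : ℕ → α → β) (g : α → β), (∀ j, j < w.length → ∀ c, f j c = g c) →
      w.mapIdx f = w.map g := by
  intro w
  induction w with
  | nil => intro f g h; simp
  | cons a t ih =>
      intro f g h
      simp only [List.mapIdx_cons, List.map_cons, h 0 (by simp) a]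
      rw [ih _ g (fun j hj c => h (j + 1) (by simpa using hj) c)]

private lemma marked_append_left {A : Type*} (v w : List A) {i : ℕ} (hi : i < v.length) :
    marked (v ++ w) i = marked v i * unmarked w := by
  unfold marked unmarked
  rw [mapIdx_append', ← FreeMonoid.ofList_append]
  congr 1
  rw [mapIdx_eq_map' w _ (fun c => (c, false))]
  intro j _ c
  simp only [Prod.mk.injEq, true_and, decide_eq_false_iff_not]
  omega

private lemma marked_append_right {A : Type*} (v w : List A) (i : ℕ) :
    marked (v ++ w) (v.length + i) = unmarked v * marked w i := by
  unfold marked unmarked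
  rw [mapIdx_append', ← FreeMonoid.ofList_append]
  congr 1
  rw [mapIdx_eq_map' v _ (fun c => (c, false))
    (fun j hj c => by simp only [Prod.mk.injEq, true_and, decide_eq_false_iff_not]; omega)]
  have : (fun (j : ℕ) (c : A) => (c, decide (v.length + j = v.length + i))) =
      fun (j : ℕ) (c : A) => (c, decide (j = i)) := by
    funext j c
    simp only [Prod.mk.injEq, true_and, decide_eq_decide]
    omega
  rw [this]

private lemma unmarked_append {A : Type*} (v w : List A) :
    unmarked (v ++ w) = unmarked v * unmarked w := by
  unfold unmarked
  rw [List.map_append, FreeMonoid.ofList_append]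

/-- If `τ : (Σ×2)* → M` is a monoid homomorphism, then
(1) `ξ(w) = ({τ(w^{(i)})}, τ(w⁰))` is a monoid homomorphism `Σ* → ◊M`;
(2) the second projection of `ξ(w)` is `τ(w⁰)`;
(3) for `V ⊆ M` with `L_Φ = τ⁻¹(V)`, `ξ⁻¹(◊V × M)` is the set of words having a marked
version in `L_Φ`. -/
theorem stmt2 {A M : Type*} [Monoid M] [DecidableEq M] (τ : FreeMonoid (A × Bool) →* M) :
    (∀ v w : List A, xiMap τ (v ++ w) = dMul (xiMap τ v) (xiMap τ w)) ∧
    (xiMap τ ([] : List A) = (∅, 1)) ∧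
    (∀ w : List A, (xiMap τ w).2 = τ (unmarked w)) ∧
    (∀ V : Set M,
      {w : List A | ∃ s ∈ (xiMap τ w).1, s ∈ V} =
        {w : List A | ∃ i < w.length, marked w i ∈ τ ⁻¹' V}) := by
  refine ⟨?_, ?_, fun w => rfl, ?_⟩
  · intro v w
    unfold xiMap dMul
    refine Prod.ext ?_ ?_
    · simp only
      ext x
      simp only [Finset.mem_image, Finset.mem_union, Finset.mem_range, List.length_append]
      constructor
      · rintro ⟨i, hi, rfl⟩
        by_cases h : i < v.length
        · exact Or.inl ⟨τ (marked v i), ⟨i, h, rfl⟩, by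
            rw [marked_append_left v w h, map_mul]⟩
        · refine Or.inr ⟨τ (marked w (i - v.length)), ⟨i - v.length, by omega, rfl⟩, ?_⟩
          rw [← map_mul, ← marked_append_right]
          congr 1
          congr 1
          omega
      · rintro (⟨s, ⟨i, hi, rfl⟩, rfl⟩ | ⟨t, ⟨i, hi, rfl⟩, rfl⟩)
        · exact ⟨i, by omega, by rw [marked_append_left v w hi, map_mul]⟩
        · exact ⟨v.length + i, by omega, by rw [marked_append_right, map_mul]⟩
    · simp only
      rw [unmarked_append, map_mul]
  · unfold xiMap
    simp only [List.length_nil, Finset.range_zero, Finset.image_empty]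
    refine Prod.ext rfl ?_
    simp only [unmarked, List.map_nil]
    exact map_one τ
  · intro V
    ext w
    simp only [Set.mem_setOf_eq, xiMap, Finset.mem_image, Finset.mem_range]
    constructor
    · rintro ⟨s, ⟨i, hi, rfl⟩, hs⟩
      exact ⟨i, hi, hs⟩
    · rintro ⟨i, hi, hs⟩
      exact ⟨τ (marked w i), ⟨i, hi, rfl⟩, hs⟩
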